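/- Let n ≥ 1 and let f : ℝ^n → ℝ be bounded and continuous, and let u(x,y) = Γ((n+1)/2)·π^{−(n+1)/2}·∫_{ℝ^n} x·f(η)/((|y−η|² + x²)^{(n+1)/2}) dη for x > 0. Then for every y ∈ ℝ^n, u(x,y) → f(y) as x → 0⁺; i.e., the Poisson integral attains the boundary datum f on the boundary of the half-space. -/

import Mathlib

open MeasureTheory Set Filter Real Topology


lemma gamma_scaled_integrable {a r : ℝ} (ha : 0 < a) (hr : 0 < r) :
    IntegrableOn (fun t : ℝ => t ^ (a - 1) * rexp (-(r * t))) (Ioi 0) := by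
  have := integrableOn_rpow_mul_exp_neg_mul_rpow (by linarith : (-1:ℝ) < a - 1) (by norm_num : (0:ℝ) < 1) hr
  refine this.congr_fun (fun t ht => ?_) measurableSet_Ioi
  simp only [Real.rpow_one, neg_mul]

lemma prod_int (n : ℕ) {s : ℝ} (hs0 : 0 < s) (hs1 : s = ((n:ℝ)+1)/2) :
    Integrable (Function.uncurry fun (w : EuclideanSpace ℝ (Fin n)) (t : ℝ) =>
      t ^ (s - 1) * rexp (-((1 + ‖w‖ ^ 2) * t))) (volume.prod (volume.restrict (Ioi 0))) := by
  have hmeas : AEStronglyMeasurable (Function.uncurry fun (w : EuclideanSpace ℝ (Fin n)) (t : ℝ) =>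
      t ^ (s - 1) * rexp (-((1 + ‖w‖ ^ 2) * t))) (volume.prod (volume.restrict (Ioi 0))) := by
    apply Measurable.aestronglyMeasurable
    fun_prop
  rw [integrable_prod_iff hmeas]
  constructor
  · refine Eventually.of_forall fun w => ?_
    have hr : (0:ℝ) < 1 + ‖w‖ ^ 2 := by positivity
    simp only [Function.uncurry_apply_pair]
    exact gamma_scaled_integrable hs0 hr
  · have heq : (fun w : EuclideanSpace ℝ (Fin n) =>
        ∫ t in Ioi 0, ‖t ^ (s - 1) * rexp (-((1 + ‖w‖ ^ 2) * t))‖)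
        = fun w => (1 + ‖w‖ ^ 2) ^ (-((n:ℝ)+1)/2) * Real.Gamma s := by
      funext w
      have hr : (0:ℝ) < 1 + ‖w‖ ^ 2 := by positivity
      rw [setIntegral_congr_fun measurableSet_Ioi
        (g := fun t => t ^ (s - 1) * rexp (-((1 + ‖w‖ ^ 2) * t)))
        (fun t ht => by
          rw [Real.norm_eq_abs, abs_of_nonneg]
          have ht0 : (0:ℝ) < t := ht
          positivity),
        Real.integral_rpow_mul_exp_neg_mul_Ioi hs0 hr, one_div, Real.inv_rpow hr.le,
        ← Real.rpow_neg hr.le]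
      congr 2
      rw [hs1]; ring
    simp only [Function.uncurry_apply_pair]
    rw [heq]
    exact (integrable_rpow_neg_one_add_norm_sq
      (by rw [finrank_euclideanSpace_fin]; linarith)).mul_const _

lemma poisson_norm (n : ℕ) :
    ∫ w : EuclideanSpace ℝ (Fin n), ((1 + ‖w‖ ^ 2) ^ (((n : ℝ) + 1) / 2))⁻¹
      = Real.pi ^ (((n : ℝ) + 1) / 2) / Real.Gamma (((n : ℝ) + 1) / 2) := by
  set s : ℝ := ((n : ℝ) + 1) / 2 with hs
  have hs0 : 0 < s := by positivity
  have hGpos : 0 < Real.Gamma s := Real.Gamma_pos_of_pos hs0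
  have key : ∀ w : EuclideanSpace ℝ (Fin n),
      ((1 + ‖w‖ ^ 2) ^ s)⁻¹ * Real.Gamma s
        = ∫ t in Ioi 0, t ^ (s - 1) * rexp (-((1 + ‖w‖ ^ 2) * t)) := by
    intro w
    have hr : (0:ℝ) < 1 + ‖w‖ ^ 2 := by positivity
    rw [Real.integral_rpow_mul_exp_neg_mul_Ioi hs0 hr, one_div, Real.inv_rpow hr.le]
  have swap : (∫ w : EuclideanSpace ℝ (Fin n),
        ∫ t in Ioi 0, t ^ (s - 1) * rexp (-((1 + ‖w‖ ^ 2) * t)))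
      = ∫ t in Ioi 0, ∫ w : EuclideanSpace ℝ (Fin n),
          t ^ (s - 1) * rexp (-((1 + ‖w‖ ^ 2) * t)) :=
    integral_integral_swap (prod_int n hs0 hs)
  have inner : ∀ t ∈ Ioi (0:ℝ),
      (∫ w : EuclideanSpace ℝ (Fin n), t ^ (s - 1) * rexp (-((1 + ‖w‖ ^ 2) * t)))
      = Real.pi ^ ((n : ℝ) / 2) * (t ^ ((1:ℝ)/2 - 1) * rexp (-(1 * t))) := by
    intro t ht
    have ht0 : (0:ℝ) < t := ht
    have e1 : (fun w : EuclideanSpace ℝ (Fin n) => t ^ (s - 1) * rexp (-((1 + ‖w‖ ^ 2) * t)))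
        = fun w => (t ^ (s - 1) * rexp (-t)) * rexp (-t * ‖w‖ ^ 2) := by
      funext w
      rw [mul_assoc, ← Real.exp_add]
      ring_nf
    rw [e1, integral_const_mul, GaussianFourier.integral_rexp_neg_mul_sq_norm ht0,
      finrank_euclideanSpace_fin, Real.div_rpow pi_pos.le ht0.le,
      div_eq_mul_inv, ← Real.rpow_neg ht0.le,
      show t ^ (s-1) * rexp (-t) * (Real.pi ^ ((n:ℝ)/2) * t ^ (-((n:ℝ)/2)))
        = Real.pi ^ ((n:ℝ)/2) * ((t ^ (s-1) * t ^ (-((n:ℝ)/2))) * rexp (-t)) from by ring,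
      ← Real.rpow_add ht0]
    rw [show s - 1 + -((n:ℝ)/2) = (1:ℝ)/2 - 1 from by rw [hs]; ring]
    norm_num
  have houter : (∫ t in Ioi 0, ∫ w : EuclideanSpace ℝ (Fin n),
        t ^ (s - 1) * rexp (-((1 + ‖w‖ ^ 2) * t)))
      = Real.pi ^ ((n : ℝ) / 2) * ((1/1 : ℝ) ^ ((1:ℝ)/2) * Real.Gamma (1/2)) := by
    rw [setIntegral_congr_fun measurableSet_Ioi inner, integral_const_mul,
      Real.integral_rpow_mul_exp_neg_mul_Ioi (by norm_num) one_pos]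
  have main : (∫ w : EuclideanSpace ℝ (Fin n), ((1 + ‖w‖ ^ 2) ^ s)⁻¹) * Real.Gamma s
      = Real.pi ^ s := by
    rw [← integral_mul_const]
    simp_rw [key]
    rw [swap, houter, Real.Gamma_one_half_eq, Real.sqrt_eq_rpow, one_div_one, Real.one_rpow,
      one_mul, ← Real.rpow_add pi_pos]
    rw [show (n:ℝ)/2 + 1/2 = s from by rw [hs]; ring]
  rw [eq_div_iff hGpos.ne']
  exact main

/-- for `f : ℝⁿ → ℝ` bounded and continuous, the Poisson integral
`u(x,y) = Γ((n+1)/2)·π^{−(n+1)/2}·∫_{ℝⁿ} x·f(η)/((|y−η|²+x²)^{(n+1)/2}) dη`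
attains the boundary datum: `u(x,y) → f(y)` as `x → 0⁺`, for every `y`. -/
theorem stmt10 (n : ℕ) (hn : 1 ≤ n) (f : EuclideanSpace ℝ (Fin n) → ℝ)
    (hf_cont : Continuous f) (hf_bdd : ∃ C, ∀ η, |f η| ≤ C)
    (u : ℝ → EuclideanSpace ℝ (Fin n) → ℝ)
    (hu : ∀ (x : ℝ) (y : EuclideanSpace ℝ (Fin n)), u x y =
      Real.Gamma (((n : ℝ) + 1) / 2) * Real.pi ^ (-(((n : ℝ) + 1) / 2)) *
        ∫ η : EuclideanSpace ℝ (Fin n),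
          x * f η / ((‖y - η‖ ^ 2 + x ^ 2) ^ (((n : ℝ) + 1) / 2))) :
    ∀ y : EuclideanSpace ℝ (Fin n),
      Tendsto (fun x => u x y) (nhdsWithin 0 (Set.Ioi 0)) (nhds (f y)) := by
  intro y
  set s : ℝ := ((n : ℝ) + 1) / 2 with hs
  have hs0 : 0 < s := by positivity
  have hGpos : 0 < Real.Gamma s := Real.Gamma_pos_of_pos hs0
  set k : EuclideanSpace ℝ (Fin n) → ℝ := fun w => ((1 + ‖w‖ ^ 2) ^ s)⁻¹ with hk
  obtain ⟨C, hC⟩ := hf_bdd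
  have hC0 : 0 ≤ C := (abs_nonneg _).trans (hC y)
  -- Step 1: rescaling for x > 0
  have step1 : ∀ x ∈ Ioi (0:ℝ),
      u x y = (Real.Gamma s * Real.pi ^ (-s)) *
        ∫ w : EuclideanSpace ℝ (Fin n), f (y + x • w) * k w := by
    intro x hx
    have hx0 : (0:ℝ) < x := hx
    rw [hu]
    congr 1
    set H : EuclideanSpace ℝ (Fin n) → ℝ :=
      fun ζ => x * f (y + ζ) / ((‖ζ‖ ^ 2 + x ^ 2) ^ s) with hH
    have e1 : (∫ η : EuclideanSpace ℝ (Fin n),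
        x * f η / ((‖y - η‖ ^ 2 + x ^ 2) ^ s)) = ∫ ζ, H ζ := by
      rw [← integral_sub_right_eq_self H y]
      congr 1
      funext η
      rw [hH]
      simp only [add_sub_cancel]
      rw [norm_sub_rev]
    have e2 : (∫ w : EuclideanSpace ℝ (Fin n), H (x • w))
        = |((x ^ n : ℝ))⁻¹| • ∫ ζ, H ζ := by
      simpa [finrank_euclideanSpace_fin] using
        MeasureTheory.Measure.integral_comp_smul (volume : Measure (EuclideanSpace ℝ (Fin n))) H x
    have hxn : (0:ℝ) < x ^ n := by positivity
    have e3 : (∫ ζ, H ζ) = ∫ w : EuclideanSpace ℝ (Fin n), x ^ n * H (x • w) := by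
      rw [integral_const_mul, e2, abs_of_pos (by positivity), smul_eq_mul, ← mul_assoc,
        mul_inv_cancel₀ hxn.ne', one_mul]
    have e4 : ∀ w : EuclideanSpace ℝ (Fin n), x ^ n * H (x • w) = f (y + x • w) * k w := by
      intro w
      have hb : (0:ℝ) < 1 + ‖w‖ ^ 2 := by positivity
      have hnorm : ‖x • w‖ ^ 2 + x ^ 2 = x ^ 2 * (1 + ‖w‖ ^ 2) := by
        rw [norm_smul, Real.norm_eq_abs, abs_of_pos hx0]; ring
      have hpow : ((x ^ 2 : ℝ) * (1 + ‖w‖ ^ 2)) ^ s = x ^ ((n:ℝ) + 1) * (1 + ‖w‖ ^ 2) ^ s := by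
        rw [Real.mul_rpow (sq_nonneg x) hb.le]
        congr 1
        rw [← Real.rpow_natCast x 2, ← Real.rpow_mul hx0.le]
        congr 1
        rw [hs]; ring
      rw [hH]
      simp only [hnorm, hpow]
      have hxn1 : x ^ ((n:ℝ) + 1) = x ^ n * x := by
        rw [Real.rpow_add hx0, Real.rpow_one, Real.rpow_natCast]
      rw [hxn1, hk]
      have h2 : ((1 + ‖w‖ ^ 2) ^ s) ≠ 0 := by positivity
      field_simp
    rw [e1, e3]
    congr 1
    funext w
    exact e4 w
  -- integrability and continuity of k
  have hkint : Integrable k := by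
    have h := integrable_rpow_neg_one_add_norm_sq
      (E := EuclideanSpace ℝ (Fin n)) (μ := volume) (r := (n : ℝ) + 1)
      (by rw [finrank_euclideanSpace_fin]; linarith)
    refine h.congr (Eventually.of_forall fun w => ?_)
    have hb : (0:ℝ) < 1 + ‖w‖ ^ 2 := by positivity
    show (1 + ‖w‖ ^ 2) ^ ((-((n:ℝ) + 1)) / 2) = ((1 + ‖w‖ ^ 2) ^ s)⁻¹
    rw [← Real.rpow_neg hb.le]
    congr 1
    rw [hs]; ring
  have hkcont : Continuous k := by
    have h1 : Continuous fun w : EuclideanSpace ℝ (Fin n) => 1 + ‖w‖ ^ 2 := by continuity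
    refine (h1.rpow_const fun w => Or.inr hs0.le).inv₀ fun w => ?_
    have hb : (0:ℝ) < 1 + ‖w‖ ^ 2 := by positivity
    positivity
  have hknn : ∀ w, 0 ≤ k w := fun w => by
    have hb : (0:ℝ) < 1 + ‖w‖ ^ 2 := by positivity
    rw [hk]; positivity
  -- Step 2: dominated convergence
  have step2 : Tendsto (fun x : ℝ => ∫ w : EuclideanSpace ℝ (Fin n), f (y + x • w) * k w)
      (nhdsWithin 0 (Ioi 0)) (𝓝 (∫ w : EuclideanSpace ℝ (Fin n), f y * k w)) := by
    refine tendsto_integral_filter_of_dominated_convergence (fun w => C * k w)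
      (Eventually.of_forall fun x => ?_) (Eventually.of_forall fun x => ?_)
      (hkint.const_mul C) (Eventually.of_forall fun w => ?_)
    · exact ((hf_cont.comp (continuous_const.add (continuous_id.const_smul x))).mul
        hkcont).aestronglyMeasurable
    · refine Eventually.of_forall fun w => ?_
      rw [Real.norm_eq_abs, abs_mul, abs_of_nonneg (hknn w)]
      exact mul_le_mul_of_nonneg_right (hC _) (hknn w)
    · have h1 : Tendsto (fun x : ℝ => y + x • w) (𝓝 0) (𝓝 y) := by
        have hc : Continuous fun x : ℝ => y + x • w :=
          continuous_const.add (continuous_id.smul continuous_const)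
        simpa using hc.tendsto 0
      exact (((hf_cont.tendsto y).comp h1).mul_const (k w)).mono_left nhdsWithin_le_nhds
  -- conclude
  have hval : ∫ w : EuclideanSpace ℝ (Fin n), f y * k w = f y * (Real.pi ^ s / Real.Gamma s) := by
    rw [integral_const_mul, hk, poisson_norm n]
  have hone : (Real.Gamma s * Real.pi ^ (-s)) * (f y * (Real.pi ^ s / Real.Gamma s)) = f y := by
    rw [Real.rpow_neg pi_pos.le]
    have hpis : (0:ℝ) < Real.pi ^ s := Real.rpow_pos_of_pos pi_pos s
    field_simp
  have := (step2.const_mul (Real.Gamma s * Real.pi ^ (-s)))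
  rw [hval, hone] at this
  refine this.congr' ?_
  filter_upwards [self_mem_nhdsWithin] with x hx
  exact (step1 x hx).symm
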